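/- Lemma 2.5 (continuity of tail integrals along sequences). Let n ≥ 1, q > 1, s ∈ (0,1) and δ₁ > 0. Let u : ℝⁿ → ℝ be measurable with ∫_{ℝⁿ} |u(y)|^{q−1}/(1 + |y|^{n+sq}) dy < ∞. Let (x_k) be a sequence in ℝⁿ with x_k → x̄ and u(x_k) → u(x̄) as k → ∞. Then each of the integrals ∫_{|z| ≥ δ₁} J_q(u(x_k) − u(x_k+z)) |z|^{−(n+sq)} dz and ∫_{|z| ≥ δ₁} J_q(u(x̄) − u(x̄+z)) |z|^{−(n+sq)} dz is absolutely convergent, and ∫_{|z| ≥ δ₁} J_q(u(x_k) − u(x_k+z)) |z|^{−(n+sq)} dz → ∫_{|z| ≥ δ₁} J_q(u(x̄) − u(x̄+z)) |z|^{−(n+sq)} dz as k → ∞. -/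
import Mathlib


open MeasureTheory Metric Filter Topology

noncomputable section

/-- `J_q(t) = |t|^{q-2} t`. -/
def Jq (q t : ℝ) : ℝ := |t| ^ (q - 2) * t

lemma abs_Jq {q : ℝ} (hq : 1 < q) (t : ℝ) : |Jq q t| = |t| ^ (q - 1) := by
  rcases eq_or_ne t 0 with h | h
  · simp [Jq, h, Real.zero_rpow (show q - 1 ≠ 0 by intro hc; linarith)]
  · have ht : (0:ℝ) < |t| := abs_pos.2 h
    rw [Jq, abs_mul, abs_of_nonneg (Real.rpow_nonneg (abs_nonneg t) _)]
    calc |t| ^ (q-2) * |t| = |t| ^ (q-2) * |t| ^ (1:ℝ) := by rw [Real.rpow_one]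
    _ = |t| ^ (q-1) := by rw [← Real.rpow_add ht]; ring_nf

lemma continuous_Jq {q : ℝ} (hq : 1 < q) : Continuous (Jq q) := by
  have habs : Continuous fun t : ℝ => |t| ^ (q-1) := by
    rw [continuous_iff_continuousAt]
    intro t
    exact (Real.continuousAt_rpow_const _ _ (Or.inr (by linarith))).comp
      continuous_abs.continuousAt
  rw [continuous_iff_continuousAt]
  intro t
  rcases eq_or_ne t 0 with h | h
  · subst h
    have h0 : Jq q 0 = 0 := by simp [Jq]
    rw [ContinuousAt, h0]
    apply squeeze_zero_norm (fun t => le_of_eq ((Real.norm_eq_abs _).trans (abs_Jq hq t)))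
    have := habs.tendsto 0
    simpa [Real.zero_rpow (show q - 1 ≠ 0 by intro hc; linarith)] using this
  · exact ((Real.continuousAt_rpow_const _ _ (Or.inl (abs_ne_zero.2 h))).comp
      continuous_abs.continuousAt).mul continuousAt_id

lemma add_rpow_le_aux {a b r : ℝ} (ha : 0 ≤ a) (hb : 0 ≤ b) (hr : 0 ≤ r) :
    (a + b) ^ r ≤ 2 ^ r * (a ^ r + b ^ r) := by
  have h1 : a + b ≤ 2 * max a b := by
    rcases le_total a b with h | h
    · rw [max_eq_right h]; linarith
    · rw [max_eq_left h]; linarith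
  have hmax : (max a b) ^ r ≤ a ^ r + b ^ r := by
    rcases le_total a b with h | h
    · rw [max_eq_right h]
      exact le_add_of_nonneg_left (Real.rpow_nonneg ha _)
    · rw [max_eq_left h]
      exact le_add_of_nonneg_right (Real.rpow_nonneg hb _)
  calc (a+b)^r ≤ (2 * max a b)^r :=
        Real.rpow_le_rpow (by linarith) h1 hr
  _ = 2^r * (max a b)^r := Real.mul_rpow (by norm_num) (le_max_of_le_left ha)
  _ ≤ 2^r * (a^r + b^r) :=
        mul_le_mul_of_nonneg_left hmax (Real.rpow_nonneg (by norm_num) _)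

set_option maxHeartbeats 1000000 in
/-- **Lemma 2.5** (continuity of tail integrals along sequences). -/
theorem tail_integral_continuity
    (n : ℕ) (hn : 1 ≤ n) (q s δ₁ : ℝ)
    (hq : 1 < q) (hs : s ∈ Set.Ioo (0 : ℝ) 1) (hδ₁ : 0 < δ₁)
    (u : EuclideanSpace ℝ (Fin n) → ℝ) (hmeas : Measurable u)
    (htail : Integrable (fun y : EuclideanSpace ℝ (Fin n) =>
        |u y| ^ (q - 1) / (1 + ‖y‖ ^ ((n : ℝ) + s * q))))
    (x : ℕ → EuclideanSpace ℝ (Fin n)) (xbar : EuclideanSpace ℝ (Fin n))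
    (hx : Tendsto x atTop (𝓝 xbar))
    (hux : Tendsto (fun k => u (x k)) atTop (𝓝 (u xbar))) :
    (∀ k, IntegrableOn
        (fun z => Jq q (u (x k) - u (x k + z)) / ‖z‖ ^ ((n : ℝ) + s * q))
        {z : EuclideanSpace ℝ (Fin n) | δ₁ ≤ ‖z‖}) ∧
    IntegrableOn
        (fun z => Jq q (u xbar - u (xbar + z)) / ‖z‖ ^ ((n : ℝ) + s * q))
        {z : EuclideanSpace ℝ (Fin n) | δ₁ ≤ ‖z‖} ∧
    Tendsto (fun k =>
        ∫ z in {z : EuclideanSpace ℝ (Fin n) | δ₁ ≤ ‖z‖},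
          Jq q (u (x k) - u (x k + z)) / ‖z‖ ^ ((n : ℝ) + s * q))
      atTop
      (𝓝 (∫ z in {z : EuclideanSpace ℝ (Fin n) | δ₁ ≤ ‖z‖},
          Jq q (u xbar - u (xbar + z)) / ‖z‖ ^ ((n : ℝ) + s * q))) := by
  obtain ⟨hs0, hs1⟩ := hs
  have hq1 : (0:ℝ) < q - 1 := by linarith
  set p : ℝ := (n : ℝ) + s * q with hp_def
  have hpn : (n : ℝ) < p := by nlinarith
  have hp0 : (0:ℝ) < p := lt_of_le_of_lt (Nat.cast_nonneg n) hpn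
  haveI : Nontrivial (EuclideanSpace ℝ (Fin n)) := by
    apply Module.nontrivial_of_finrank_pos (R := ℝ)
    rw [finrank_euclideanSpace_fin]; omega
  -- uniform bounds on x k and u (x k)
  obtain ⟨M₀, hM₀⟩ : ∃ M₀, ∀ k, ‖x k‖ ≤ M₀ := by
    obtain ⟨M₀, hM₀⟩ := hx.norm.bddAbove_range
    exact ⟨M₀, fun k => hM₀ (Set.mem_range_self k)⟩
  set M : ℝ := max M₀ ‖xbar‖ with hMdef
  have hMk : ∀ k, ‖x k‖ ≤ M := fun k => (hM₀ k).trans (le_max_left _ _)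
  have hMbar : ‖xbar‖ ≤ M := le_max_right _ _
  have hM0 : 0 ≤ M := (norm_nonneg xbar).trans hMbar
  obtain ⟨B₀, hB₀⟩ : ∃ B₀, ∀ k, |u (x k)| ≤ B₀ := by
    obtain ⟨B₀, hB₀⟩ := hux.abs.bddAbove_range
    exact ⟨B₀, fun k => hB₀ (Set.mem_range_self k)⟩
  set B : ℝ := max B₀ |u xbar| with hBdef
  have hBk : ∀ k, |u (x k)| ≤ B := fun k => (hB₀ k).trans (le_max_left _ _)
  have hBbar : |u xbar| ≤ B := le_max_right _ _
  have hB0 : 0 ≤ B := (abs_nonneg _).trans hBbar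
  -- constant for the kernel comparison
  set C : ℝ := δ₁ ^ (-p) + (1 + M / δ₁) ^ p with hCdef
  have hC0 : 0 < C := add_pos (Real.rpow_pos_of_pos hδ₁ _)
    (Real.rpow_pos_of_pos (by positivity) _)
  -- key pointwise kernel bound
  have key : ∀ (a : EuclideanSpace ℝ (Fin n)), ‖a‖ ≤ M →
      ∀ y : EuclideanSpace ℝ (Fin n), δ₁ ≤ ‖y - a‖ →
      (‖y - a‖ ^ p)⁻¹ ≤ C * (1 + ‖y‖ ^ p)⁻¹ := by
    intro a ha y hy
    have hya : (0:ℝ) < ‖y - a‖ := lt_of_lt_of_le hδ₁ hy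
    have h1 : ‖y‖ ≤ (1 + M / δ₁) * ‖y - a‖ := by
      have hyn : ‖y‖ ≤ ‖y - a‖ + ‖a‖ := by
        have := norm_sub_norm_le y a
        linarith
      have hMa : ‖a‖ ≤ (M/δ₁) * ‖y - a‖ := by
        calc ‖a‖ ≤ M := ha
        _ = (M/δ₁) * δ₁ := by field_simp
        _ ≤ (M/δ₁) * ‖y - a‖ := mul_le_mul_of_nonneg_left hy (by positivity)
      nlinarith
    have h2 : ‖y‖ ^ p ≤ (1 + M / δ₁) ^ p * ‖y - a‖ ^ p := by
      rw [← Real.mul_rpow (by positivity) hya.le]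
      exact Real.rpow_le_rpow (norm_nonneg _) h1 hp0.le
    have h3 : (1:ℝ) ≤ δ₁ ^ (-p) * ‖y - a‖ ^ p := by
      have hd : δ₁ ^ p ≤ ‖y - a‖ ^ p := Real.rpow_le_rpow hδ₁.le hy hp0.le
      have hdp : (0:ℝ) < δ₁ ^ p := Real.rpow_pos_of_pos hδ₁ _
      rw [Real.rpow_neg hδ₁.le, inv_mul_eq_div, le_div_iff₀ hdp, one_mul]
      exact hd
    have h4 : 1 + ‖y‖ ^ p ≤ C * ‖y - a‖ ^ p := by
      rw [hCdef]; nlinarith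
    have hXpos : (0:ℝ) < ‖y - a‖ ^ p := Real.rpow_pos_of_pos hya _
    have hYpos : (0:ℝ) < 1 + ‖y‖ ^ p := by positivity
    have h5 : (C * ‖y - a‖ ^ p)⁻¹ ≤ (1 + ‖y‖ ^ p)⁻¹ := by
      rw [← one_div, ← one_div]
      exact one_div_le_one_div_of_le hYpos h4
    calc (‖y - a‖ ^ p)⁻¹ = C * (C * ‖y - a‖ ^ p)⁻¹ := by
          rw [mul_inv, ← mul_assoc, mul_inv_cancel₀ hC0.ne', one_mul]
    _ ≤ C * (1 + ‖y‖ ^ p)⁻¹ := mul_le_mul_of_nonneg_left h5 hC0.le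
  -- sets and translated functions
  set T : Set (EuclideanSpace ℝ (Fin n)) := {z | δ₁ ≤ ‖z‖} with hT
  set f : EuclideanSpace ℝ (Fin n) → ℝ → EuclideanSpace ℝ (Fin n) → ℝ :=
    fun a c y => Jq q (c - u y) / ‖y - a‖ ^ p with hf
  set S : EuclideanSpace ℝ (Fin n) → Set (EuclideanSpace ℝ (Fin n)) :=
    fun a => {y | δ₁ ≤ ‖y - a‖} with hS
  have hSmeas : ∀ a, MeasurableSet (S a) := fun a =>
    (isClosed_le continuous_const
      ((continuous_id.sub continuous_const).norm)).measurableSet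
  set F : EuclideanSpace ℝ (Fin n) → ℝ → EuclideanSpace ℝ (Fin n) → ℝ :=
    fun a c => (S a).indicator (f a c) with hF
  -- change of variables
  have hchg : ∀ (a : EuclideanSpace ℝ (Fin n)) (c : ℝ),
      (fun z => Jq q (c - u (a + z)) / ‖z‖ ^ p) = (f a c) ∘ (fun z => a + z) := by
    intro a c; funext z; simp [hf, Function.comp, add_sub_cancel_left]
  have hpre : ∀ a : EuclideanSpace ℝ (Fin n), (fun z => a + z) ⁻¹' (S a) = T := by
    intro a; ext z; simp [hS, hT, add_sub_cancel_left]
  have hmp : ∀ a : EuclideanSpace ℝ (Fin n),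
      MeasurePreserving (fun z => a + z)
        (volume : Measure (EuclideanSpace ℝ (Fin n))) volume :=
    fun a => measurePreserving_add_left volume a
  have hemb : ∀ a : EuclideanSpace ℝ (Fin n),
      MeasurableEmbedding (fun z : EuclideanSpace ℝ (Fin n) => a + z) :=
    fun a => (MeasurableEquiv.addLeft a).measurableEmbedding
  have hIntIff : ∀ (a : EuclideanSpace ℝ (Fin n)) (c : ℝ),
      IntegrableOn (fun z => Jq q (c - u (a + z)) / ‖z‖ ^ p) T ↔ Integrable (F a c) := by
    intro a c
    rw [hchg a c, ← hpre a, (hmp a).integrableOn_comp_preimage (hemb a), hF]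
    exact (integrable_indicator_iff (hSmeas a)).symm
  have hIntEq : ∀ (a : EuclideanSpace ℝ (Fin n)) (c : ℝ),
      ∫ z in T, Jq q (c - u (a + z)) / ‖z‖ ^ p = ∫ y, F a c y := by
    intro a c
    rw [hchg a c, ← hpre a]
    rw [show (∫ z in (fun z => a + z) ⁻¹' (S a), ((f a c) ∘ (fun z => a + z)) z)
        = ∫ y in S a, f a c y from
      (hmp a).setIntegral_preimage_emb (hemb a) (f a c) (S a)]
    rw [hF, integral_indicator (hSmeas a)]
  -- measurability
  have hfm : ∀ a c, Measurable (f a c) := by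
    intro a c
    apply Measurable.div
    · exact (continuous_Jq hq).measurable.comp (measurable_const.sub hmeas)
    · have : Continuous fun y : EuclideanSpace ℝ (Fin n) => ‖y - a‖ ^ p := by
        rw [continuous_iff_continuousAt]
        intro y
        exact (Real.continuousAt_rpow_const _ _ (Or.inr hp0.le)).comp
          ((continuous_id.sub continuous_const).norm).continuousAt
      exact this.measurable
  have hFm : ∀ a c, AEStronglyMeasurable (F a c)
      (volume : Measure (EuclideanSpace ℝ (Fin n))) := fun a c =>
    (((hfm a c).indicator (hSmeas a))).aestronglyMeasurable
  -- dominating function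
  set g : EuclideanSpace ℝ (Fin n) → ℝ := fun y =>
    2 ^ (q-1) * C * B ^ (q-1) * (1 + ‖y‖ ^ p)⁻¹
      + 2 ^ (q-1) * C * (|u y| ^ (q-1) / (1 + ‖y‖ ^ p)) with hg
  have hint1 : Integrable (fun y : EuclideanSpace ℝ (Fin n) => (1 + ‖y‖ ^ p)⁻¹) := by
    have hr : ((Module.finrank ℝ (EuclideanSpace ℝ (Fin n))):ℝ) < p := by
      rw [finrank_euclideanSpace_fin]; exact hpn
    have hbase := integrable_one_add_norm (μ := (volume : Measure (EuclideanSpace ℝ (Fin n)))) hr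
    have hcont : Continuous fun y : EuclideanSpace ℝ (Fin n) => (1 + ‖y‖ ^ p)⁻¹ := by
      apply Continuous.inv₀
      · have : Continuous fun y : EuclideanSpace ℝ (Fin n) => ‖y‖ ^ p := by
          rw [continuous_iff_continuousAt]
          intro y
          exact (Real.continuousAt_rpow_const _ _ (Or.inr hp0.le)).comp
            continuous_norm.continuousAt
        exact continuous_const.add this
      · intro y; positivity
    apply Integrable.mono' (hbase.const_mul (2 ^ p)) hcont.aestronglyMeasurable
    apply ae_of_all
    intro y
    have h1 : (0:ℝ) < 1 + ‖y‖ ^ p := by positivity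
    have h2 : (0:ℝ) < (1 + ‖y‖) ^ p := Real.rpow_pos_of_pos (by positivity) _
    have hineq : (1 + ‖y‖) ^ p ≤ 2 ^ p * (1 + ‖y‖ ^ p) := by
      have h := add_rpow_le_aux (zero_le_one (α := ℝ)) (norm_nonneg y) hp0.le
      rwa [Real.one_rpow] at h
    rw [Real.norm_eq_abs, abs_of_pos (inv_pos.2 h1), Real.rpow_neg (by positivity)]
    have h6 : (2 ^ p * (1 + ‖y‖ ^ p))⁻¹ ≤ ((1 + ‖y‖) ^ p)⁻¹ := by
      rw [← one_div, ← one_div]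
      exact one_div_le_one_div_of_le h2 hineq
    calc (1 + ‖y‖ ^ p)⁻¹ = 2 ^ p * (2 ^ p * (1 + ‖y‖ ^ p))⁻¹ := by
          have h2p : (0:ℝ) < 2 ^ p := Real.rpow_pos_of_pos two_pos _
          rw [mul_inv, ← mul_assoc, mul_inv_cancel₀ h2p.ne', one_mul]
    _ ≤ 2 ^ p * ((1 + ‖y‖) ^ p)⁻¹ :=
          mul_le_mul_of_nonneg_left h6 (Real.rpow_pos_of_pos two_pos p).le
  have hg_int : Integrable g := by
    apply Integrable.add
    · exact hint1.const_mul _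
    · exact htail.const_mul _
  have hbound : ∀ (a : EuclideanSpace ℝ (Fin n)) (c : ℝ), ‖a‖ ≤ M → |c| ≤ B →
      ∀ y, ‖F a c y‖ ≤ g y := by
    intro a c ha hc y
    rw [Real.norm_eq_abs]
    by_cases hy : y ∈ S a
    · simp only [hF]
      rw [Set.indicator_of_mem hy]
      have hy' : δ₁ ≤ ‖y - a‖ := hy
      have hya : (0:ℝ) < ‖y - a‖ := lt_of_lt_of_le hδ₁ hy'
      have hXpos : (0:ℝ) < ‖y - a‖ ^ p := Real.rpow_pos_of_pos hya _
      have e1 : |f a c y| = |c - u y| ^ (q-1) * (‖y - a‖ ^ p)⁻¹ := by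
        simp only [hf]
        rw [abs_div, abs_Jq hq, abs_of_pos hXpos, div_eq_mul_inv]
      rw [e1]
      have e2 : |c - u y| ^ (q-1) ≤ 2^(q-1) * (B^(q-1) + |u y|^(q-1)) := by
        have habs : |c - u y| ≤ |c| + |u y| := by
          have := abs_add_le c (-(u y))
          simpa [sub_eq_add_neg] using this
        calc |c - u y| ^ (q-1) ≤ (|c| + |u y|) ^ (q-1) :=
              Real.rpow_le_rpow (abs_nonneg _) habs hq1.le
        _ ≤ 2^(q-1) * (|c|^(q-1) + |u y|^(q-1)) :=
              add_rpow_le_aux (abs_nonneg _) (abs_nonneg _) hq1.le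
        _ ≤ 2^(q-1) * (B^(q-1) + |u y|^(q-1)) := by
              have hcB : |c|^(q-1) ≤ B^(q-1) :=
                Real.rpow_le_rpow (abs_nonneg _) hc hq1.le
              have h2p : (0:ℝ) ≤ 2^(q-1) := Real.rpow_nonneg (by norm_num) _
              nlinarith
      have e3 := key a ha y hy'
      calc |c - u y|^(q-1) * (‖y - a‖^p)⁻¹
          ≤ (2^(q-1)*(B^(q-1)+|u y|^(q-1))) * (C * (1+‖y‖^p)⁻¹) := by
            apply mul_le_mul e2 e3 (inv_nonneg.2 hXpos.le)
            positivity
      _ = g y := by simp only [hg]; rw [div_eq_mul_inv]; ring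
    · simp only [hF]
      rw [Set.indicator_of_notMem hy, abs_zero]
      simp only [hg]
      positivity
  -- pointwise a.e. convergence
  have hae : ∀ᵐ y : EuclideanSpace ℝ (Fin n), ‖y - xbar‖ ≠ δ₁ := by
    have hsph : (volume : Measure (EuclideanSpace ℝ (Fin n))) (sphere xbar δ₁) = 0 :=
      Measure.addHaar_sphere volume xbar δ₁
    rw [ae_iff]
    convert hsph using 2
    ext y
    simp [Metric.mem_sphere, dist_eq_norm]
  have hptwise : ∀ᵐ y : EuclideanSpace ℝ (Fin n),
      Tendsto (fun k => F (x k) (u (x k)) y) atTop (𝓝 (F xbar (u xbar) y)) := by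
    filter_upwards [hae] with y hy
    have hnorm : Tendsto (fun k => ‖y - x k‖) atTop (𝓝 ‖y - xbar‖) :=
      (tendsto_const_nhds.sub hx).norm
    rcases lt_or_gt_of_ne hy with hlt | hgt
    · have hev : ∀ᶠ k in atTop, ‖y - x k‖ < δ₁ := hnorm.eventually_lt_const hlt
      have hF0 : F xbar (u xbar) y = 0 := by
        simp only [hF]
        rw [Set.indicator_of_notMem]
        simpa [hS] using hlt
      rw [hF0]
      refine Tendsto.congr' ?_ (tendsto_const_nhds : Tendsto (fun _ : ℕ => (0:ℝ)) atTop (𝓝 0))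
      filter_upwards [hev] with k hk
      refine (Set.indicator_of_notMem ?_ _).symm
      simpa [hS] using hk
    · have hev : ∀ᶠ k in atTop, δ₁ < ‖y - x k‖ := hnorm.eventually_const_lt hgt
      have hmem : y ∈ S xbar := le_of_lt hgt
      have hFx : F xbar (u xbar) y = f xbar (u xbar) y := Set.indicator_of_mem hmem _
      have hden : Tendsto (fun k => ‖y - x k‖ ^ p) atTop (𝓝 (‖y - xbar‖ ^ p)) :=
        hnorm.rpow_const (Or.inl (lt_trans hδ₁ hgt).ne')
      have hnum : Tendsto (fun k => Jq q (u (x k) - u y)) atTop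
          (𝓝 (Jq q (u xbar - u y))) :=
        ((continuous_Jq hq).continuousAt.tendsto).comp (hux.sub tendsto_const_nhds)
      have hdiv : Tendsto (fun k => Jq q (u (x k) - u y) / ‖y - x k‖ ^ p) atTop
          (𝓝 (Jq q (u xbar - u y) / ‖y - xbar‖ ^ p)) :=
        hnum.div hden (ne_of_gt (Real.rpow_pos_of_pos (lt_trans hδ₁ hgt) _))
      rw [hFx]
      apply hdiv.congr'
      filter_upwards [hev] with k hk
      exact (Set.indicator_of_mem (show y ∈ S (x k) from le_of_lt hk)
        (f (x k) (u (x k)))).symm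
  -- dominated convergence
  have hFint : ∀ (a : EuclideanSpace ℝ (Fin n)) (c : ℝ), ‖a‖ ≤ M → |c| ≤ B →
      Integrable (F a c) := fun a c ha hc =>
    Integrable.mono' hg_int (hFm a c) (ae_of_all _ (hbound a c ha hc))
  have hTend : Tendsto (fun k => ∫ y, F (x k) (u (x k)) y) atTop
      (𝓝 (∫ y, F xbar (u xbar) y)) :=
    tendsto_integral_of_dominated_convergence g (fun k => hFm _ _) hg_int
      (fun k => ae_of_all _ (hbound _ _ (hMk k) (hBk k))) hptwise
  refine ⟨fun k => (hIntIff (x k) (u (x k))).2 (hFint _ _ (hMk k) (hBk k)),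
    (hIntIff xbar (u xbar)).2 (hFint _ _ hMbar hBbar), ?_⟩
  have := hTend
  rw [← hIntEq xbar (u xbar)] at this
  exact this.congr fun k => (hIntEq (x k) (u (x k))).symm
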